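/- In the queueing construction, there exists M₀ such that for all integers M ≥ M₀ and all j with 1 ≤ j ≤ M, the jump-to-c condition holds at (0,μ_j): Σ_{(i',μ_{j'}) ≠ (0,μ_j)} |A^{i'}(μ_j|μ_{j'})·Q^{μ_j}(0|i')|·g(i',μ_{j'}) ≥ Σ_{(i',μ_{j'}) ≠ (0,μ_j)} |A^0(μ_{j'}|μ_j)·Q^{μ_{j'}}(i'|0)|·g(0,μ_j); hence, under the minimal choice of τ_ε, a jump from (0,μ_j) to the transition state c is possible for every j ≠ 0 when M is large enough. -/

import Mathlib

noncomputable section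

/-- `μ_j = 1/2 + j/M`. -/
def μval (M j : ℕ) : ℝ := 1 / 2 + (j : ℝ) / (M : ℝ)

/-- The queueing generator `Q^μ` on `X = {0,…,N}`: `Q^μ(i+1|i) = 1`, `Q^μ(i−1|i) = μ`,
diagonal `−1` at `0`, `−μ` at `N`, `−(1+μ)` in between, other entries `0`;
`Qq N μ i' i = Q^μ(i'|i)`. -/
def Qq (N : ℕ) (μ : ℝ) (i' i : Fin (N + 1)) : ℝ :=
  if i'.val = i.val + 1 then 1
  else if i'.val + 1 = i.val then μ
  else if i' = i then -((if i.val < N then (1 : ℝ) else 0) + (if 0 < i.val then μ else 0))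
  else 0

/-- The upward jump rate of the environment chain `A^i`: `i` for `i ≥ 1`, `1/M²` for `i = 0`. -/
def upRate (M i : ℕ) : ℝ := if i = 0 then ((M : ℝ) ^ 2)⁻¹ else (i : ℝ)

/-- The environment generator `A^i` on `Z = {μ_0,…,μ_M}` (indexed by `j`):
`A^i(μ_{j+1}|μ_j) = upRate M i`, `A^i(μ_{j−1}|μ_j) = 1`, diagonal making row sums zero,
other entries `0`; `Aq M i j' j = A^i(μ_{j'}|μ_j)`. -/
def Aq (M i : ℕ) (j' j : Fin (M + 1)) : ℝ :=
  if j'.val = j.val + 1 then upRate M i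
  else if j'.val + 1 = j.val then 1
  else if j' = j then -((if j.val < M then upRate M i else 0) + (if 0 < j.val then (1 : ℝ) else 0))
  else 0

/-- `η(μ) = Σ_{i=0}^{N} μ^{−i}`. -/
def ηq (N : ℕ) (μ : ℝ) : ℝ := ∑ k ∈ Finset.range (N + 1), μ⁻¹ ^ k

/-- `m^μ(i) = μ^{−i}/η(μ)`. -/
def mq (N : ℕ) (μ : ℝ) (i : Fin (N + 1)) : ℝ := μ⁻¹ ^ i.val / ηq N μ

/-- `σ(i) = Σ_{j=0}^{M} i^j` for `i ≥ 1`, and `σ(0) = Σ_{j=0}^{M} M^{−2j}`. -/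
def σq (M i : ℕ) : ℝ := ∑ j ∈ Finset.range (M + 1), upRate M i ^ j

/-- `ν^i(μ_j) = i^j/σ(i)` for `i ≥ 1`, and `ν^0(μ_j) = M^{−2j}/σ(0)`. -/
def νq (M i : ℕ) (j : Fin (M + 1)) : ℝ := upRate M i ^ j.val / σq M i

/-- The product measure `g(i,μ_j) = m^{μ_j}(i)·ν^i(μ_j)` on the natural space. -/
def gq (N M : ℕ) (p : Fin (N + 1) × Fin (M + 1)) : ℝ :=
  mq N (μval M p.2.val) p.1 * νq M p.1.val p.2

/-- The minimal choice `τ_ε(i,μ)`: the maximum of the two ratios in (12). -/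
def τq (N M : ℕ) (p : Fin (N + 1) × Fin (M + 1)) : ℝ :=
  max
    ((∑ s ∈ Finset.univ.erase p,
        |Aq M s.1.val p.2 s.2 * Qq N (μval M p.2.val) p.1 s.1| * gq N M s) /
      (Aq M p.1.val p.2 p.2 * Qq N (μval M p.2.val) p.1 p.1 * gq N M p))
    ((∑ s ∈ Finset.univ.erase p,
        |Aq M p.1.val s.2 p.2 * Qq N (μval M s.2.val) s.1 p.1|) /
      (Aq M p.1.val p.2 p.2 * Qq N (μval M p.2.val) p.1 p.1))

/-- The natural-space part of the combined generator:
`R_ε(i',μ'|i,μ) = |A^i(μ'|μ)·Q^{μ'}(i'|i)|` off the diagonal and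
`R_ε(i,μ|i,μ) = −τ_ε(i,μ)·|A^i(μ|μ)·Q^μ(i|i)|`; `Rnat N M s p = R_ε(s|p)`. -/
def Rnat (N M : ℕ) (s p : Fin (N + 1) × Fin (M + 1)) : ℝ :=
  if s = p then -τq N M p * |Aq M p.1.val p.2 p.2 * Qq N (μval M p.2.val) p.1 p.1|
  else |Aq M p.1.val s.2 p.2 * Qq N (μval M s.2.val) s.1 p.1|

/-- Rate into the maintenance state: `R_ε(c_i|(i,μ)) = −Σ_{(i',μ')} R_ε(i',μ'|(i,μ))`. -/
def RcIn (N M : ℕ) (p : Fin (N + 1) × Fin (M + 1)) : ℝ :=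
  -∑ s : Fin (N + 1) × Fin (M + 1), Rnat N M s p

/-- Rate out of the maintenance state:
`R_ε((i,μ)|c_i) = −(1/ε)·Σ_{(i',μ')} R_ε((i,μ)|(i',μ'))·g(i',μ')`. -/
def RcOut (N M : ℕ) (ε : ℝ) (p : Fin (N + 1) × Fin (M + 1)) : ℝ :=
  -(1 / ε) * ∑ s : Fin (N + 1) × Fin (M + 1), Rnat N M p s * gq N M s

/-- The recursively defined pair `(V_r^{(j)}, V_c^{(j)})` with `j = N − t` (fuel `t`). -/
def Vrc (N M : ℕ) (ε : ℝ) : ℕ → ℝ × ℝ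
  | 0 =>
      (∑ μ : Fin (M + 1),
          RcIn N M (⟨N, Nat.lt_succ_self N⟩, μ) * gq N M (⟨N, Nat.lt_succ_self N⟩, μ),
        ε * ∑ μ : Fin (M + 1), RcOut N M ε (⟨N, Nat.lt_succ_self N⟩, μ))
  | t + 1 =>
      let v := Vrc N M ε t
      let j : Fin (N + 1) := ⟨N - (t + 1), by omega⟩
      ((∑ μ : Fin (M + 1), RcIn N M (j, μ) * gq N M (j, μ)) + max (v.1 - v.2) 0,
        ε * (∑ μ : Fin (M + 1), RcOut N M ε (j, μ)) + max (v.2 - v.1) 0)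

/-- `(V_r^{(j)}, V_c^{(j)})` for `1 ≤ j ≤ N`. -/
def Vj (N M : ℕ) (ε : ℝ) (j : ℕ) : ℝ × ℝ := Vrc N M ε (N - j)

/-- The combined generator `R_ε` of the multiple-maintenance-state construction on
`Ŷ = (X×Z) ⊕ {c_0,…,c_N}`; `Rhat N M ε s p = R_ε(s|p)`. -/
def Rhat (N M : ℕ) (ε : ℝ) :
    ((Fin (N + 1) × Fin (M + 1)) ⊕ Fin (N + 1)) →
      ((Fin (N + 1) × Fin (M + 1)) ⊕ Fin (N + 1)) → ℝ
  | Sum.inl s, Sum.inl p => Rnat N M s p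
  | Sum.inr a, Sum.inl p => if a = p.1 then RcIn N M p else 0
  | Sum.inl s, Sum.inr a => if a = s.1 then RcOut N M ε s else 0
  | Sum.inr a, Sum.inr b =>
      if a = b then
        if b.val = 0 then
          -((∑ μ : Fin (M + 1), RcOut N M ε (b, μ)) +
              max ((Vj N M ε 1).2 - (Vj N M ε 1).1) 0 / ε)
        else -(max (Vj N M ε b.val).1 (Vj N M ε b.val).2) / ε
      else if a.val = b.val + 1 then
        max ((Vj N M ε (b.val + 1)).2 - (Vj N M ε (b.val + 1)).1) 0 / ε
      else if a.val + 1 = b.val then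
        max ((Vj N M ε b.val).1 - (Vj N M ε b.val).2) 0 / ε
      else 0

/-- The target stationary measure on `Ŷ`: `g` on the natural space, `ε` on each `c_i`. -/
def ghat (N M : ℕ) (ε : ℝ) : ((Fin (N + 1) × Fin (M + 1)) ⊕ Fin (N + 1)) → ℝ :=
  Sum.elim (gq N M) fun _ => ε


namespace Stmt14Aux
open Finset

lemma upRate_nonneg (M i : ℕ) : 0 ≤ upRate M i := by
  unfold upRate; split <;> positivity

lemma sigma_ge_one (M i : ℕ) : 1 ≤ σq M i := by
  unfold σq
  calc (1:ℝ) = upRate M i ^ 0 := by simp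
    _ ≤ _ := Finset.single_le_sum (f := fun k => upRate M i ^ k)
        (fun k _ => pow_nonneg (upRate_nonneg M i) k) (by simp)

lemma sigma_pos (M i : ℕ) : 0 < σq M i := lt_of_lt_of_le one_pos (sigma_ge_one M i)

lemma mu_pos (M j : ℕ) : 0 < μval M j := by
  unfold μval; positivity

lemma eta_pos (N : ℕ) (μ : ℝ) (hμ : 0 < μ) : 0 < ηq N μ := by
  unfold ηq
  have h1 : (1:ℝ) ≤ ∑ k ∈ Finset.range (N + 1), μ⁻¹ ^ k := by
    calc (1:ℝ) = μ⁻¹ ^ 0 := by simp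
      _ ≤ _ := Finset.single_le_sum (f := fun k => μ⁻¹ ^ k)
          (fun k _ => pow_nonneg (by positivity) k) (by simp)
  linarith

lemma gq_nonneg (N M : ℕ) (s : Fin (N + 1) × Fin (M + 1)) : 0 ≤ gq N M s := by
  unfold gq mq νq
  have := eta_pos N (μval M s.2.val) (mu_pos M s.2.val)
  have := sigma_pos M s.1.val
  have := upRate_nonneg M s.1.val
  have : (0:ℝ) ≤ μval M s.2.val := le_of_lt (mu_pos M s.2.val)
  positivity

lemma qq_abs_col0 (N : ℕ) (hN : 1 ≤ N) (μ' : ℝ) (i' : Fin (N + 1)) :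
    |Qq N μ' i' 0| = (if i'.val = 1 then (1:ℝ) else 0) + (if i'.val = 0 then 1 else 0) := by
  rcases i' with ⟨v, hv⟩
  have h0 : ((0 : Fin (N+1))).val = 0 := rfl
  unfold Qq
  simp only [h0, Fin.ext_iff]
  split_ifs <;> simp_all <;> omega

lemma qq_sum_col0 (N : ℕ) (hN : 1 ≤ N) (μ' : ℝ) :
    ∑ i' : Fin (N + 1), |Qq N μ' i' 0| = 2 := by
  have h : ∀ i' : Fin (N+1), |Qq N μ' i' 0| =
      (if i' = (⟨1, by omega⟩ : Fin (N+1)) then (1:ℝ) else 0)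
      + (if i' = (⟨0, by omega⟩ : Fin (N+1)) then 1 else 0) := by
    intro i'
    rw [qq_abs_col0 N hN μ' i']
    congr 1 <;> · congr 1; rw [Fin.ext_iff]
  rw [Finset.sum_congr rfl (fun i' _ => h i'), Finset.sum_add_distrib,
    Finset.sum_ite_eq' univ, Finset.sum_ite_eq' univ]
  norm_num

lemma aq0_abs_le (M : ℕ) (hM : 1 ≤ M) (j j' : Fin (M + 1)) :
    |Aq M 0 j' j| ≤ (if j'.val = j.val + 1 then (1:ℝ) else 0)
      + (if j'.val + 1 = j.val then 1 else 0) + (if j' = j then 2 else 0) := by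
  have hMinv : ((M:ℝ) ^ 2)⁻¹ ≤ 1 := by
    rw [inv_le_one_iff₀]
    right
    have : (1:ℝ) ≤ (M:ℝ) := by exact_mod_cast hM
    nlinarith
  have hMinv0 : (0:ℝ) ≤ ((M:ℝ) ^ 2)⁻¹ := by positivity
  unfold Aq upRate
  simp only [if_pos rfl]
  simp only [Fin.ext_iff] at *
  split_ifs <;> simp_all [abs_le] <;>
    (try constructor) <;>
    nlinarith [inv_nonneg.2 (sq_nonneg (M:ℝ)), hMinv]

lemma sum_ite_val_eq (M : ℕ) (c : ℝ) (hc : 0 ≤ c) (t : ℕ) :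
    ∑ j' : Fin (M + 1), (if j'.val = t then c else 0) ≤ c := by
  by_cases h : t ≤ M
  · have : ∀ j' : Fin (M+1), (if j'.val = t then c else 0)
        = (if j' = (⟨t, by omega⟩ : Fin (M+1)) then c else 0) := by
      intro j'; congr 1; rw [Fin.ext_iff]
    rw [Finset.sum_congr rfl (fun j' _ => this j'), Finset.sum_ite_eq' univ]
    simp
  · rw [Finset.sum_eq_zero]
    · exact hc
    · intro j' _
      have := j'.isLt
      rw [if_neg (by omega)]

lemma aq0_sum_le (M : ℕ) (hM : 1 ≤ M) (j : Fin (M + 1)) :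
    ∑ j' : Fin (M + 1), |Aq M 0 j' j| ≤ 4 := by
  have key := Finset.sum_le_sum (fun j' (_ : j' ∈ univ) => aq0_abs_le M hM j j')
  have s1 := sum_ite_val_eq M 1 (by norm_num) (j.val + 1)
  have s2 : ∑ j' : Fin (M + 1), (if j'.val + 1 = j.val then (1:ℝ) else 0) ≤ 1 := by
    rcases Nat.eq_zero_or_pos j.val with h | h
    · rw [Finset.sum_eq_zero]
      · norm_num
      · intro j' _; rw [if_neg (by omega)]
    · have heq : ∀ j' : Fin (M+1), (if j'.val + 1 = j.val then (1:ℝ) else 0)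
          = (if j'.val = j.val - 1 then (1:ℝ) else 0) := by
        intro j'
        have h1 : (j'.val + 1 = j.val) ↔ (j'.val = j.val - 1) := by omega
        simp [h1]
      rw [Finset.sum_congr rfl (fun j' _ => heq j')]
      exact sum_ite_val_eq M 1 (by norm_num) (j.val - 1)
  have s3 : ∑ j' : Fin (M + 1), (if j' = j then (2:ℝ) else 0) = 2 := by
    rw [Finset.sum_ite_eq' univ]; simp
  rw [Finset.sum_add_distrib, Finset.sum_add_distrib] at key
  linarith

end Stmt14Aux

/- STATEMENT 14: there is M₀ such that for all M ≥ M₀ and every j ≠ 0, the jump-to-c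
condition holds at (0,μ_j), and hence (minimal choice) τ_ε(0,μ_j) equals its first
branch, i.e. a jump from (0,μ_j) to the transition state c is possible. -/
open Stmt14Aux in
theorem stmt14 (N : ℕ) (hN : 1 ≤ N) :
    ∃ M₀ : ℕ, ∀ M : ℕ, M₀ ≤ M → ∀ j : Fin (M + 1), 1 ≤ j.val →
      (∑ s ∈ Finset.univ.erase ((0 : Fin (N + 1)), j),
          |Aq M s.1.val j s.2 * Qq N (μval M j.val) (0 : Fin (N + 1)) s.1| * gq N M s ≥
        ∑ s ∈ Finset.univ.erase ((0 : Fin (N + 1)), j),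
          |Aq M 0 s.2 j * Qq N (μval M s.2.val) s.1 (0 : Fin (N + 1))| *
            gq N M ((0 : Fin (N + 1)), j)) ∧
      τq N M ((0 : Fin (N + 1)), j) =
        (∑ s ∈ Finset.univ.erase ((0 : Fin (N + 1)), j),
            |Aq M s.1.val j s.2 * Qq N (μval M j.val) (0 : Fin (N + 1)) s.1| * gq N M s) /
          (Aq M 0 j j * Qq N (μval M j.val) (0 : Fin (N + 1)) (0 : Fin (N + 1)) *
            gq N M ((0 : Fin (N + 1)), j)) := by
  refine ⟨9, fun M hM j hj => ?_⟩
  have hM1 : 1 ≤ M := by omega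
  have hMR : (9:ℝ) ≤ (M:ℝ) := by exact_mod_cast hM
  have hMpos : (0:ℝ) < (M:ℝ) := by linarith
  set μ : ℝ := μval M j.val with hμdef
  have hμpos : 0 < μ := Stmt14Aux.mu_pos M j.val
  have hη : 0 < ηq N μ := Stmt14Aux.eta_pos N μ hμpos
  have hηne : ηq N μ ≠ 0 := ne_of_gt hη
  have hμne : μ ≠ 0 := ne_of_gt hμpos
  have hM1ne : ((M:ℝ)+1) ≠ 0 := by positivity
  have hMinv : ((M:ℝ) ^ 2)⁻¹ ≤ 1 := by
    rw [inv_le_one_iff₀]; right; nlinarith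
  have hi1 : 1 < N + 1 := by omega
  set i1 : Fin (N+1) := ⟨1, hi1⟩ with hi1def
  -- LHS lower bound
  have hs0mem : (i1, j) ∈ Finset.univ.erase ((0 : Fin (N + 1)), j) := by
    rw [Finset.mem_erase]
    refine ⟨?_, Finset.mem_univ _⟩
    simp [hi1def, Prod.ext_iff, Fin.ext_iff]
  have hsingle := Finset.single_le_sum
    (f := fun s : Fin (N+1) × Fin (M+1) =>
      |Aq M s.1.val j s.2 * Qq N (μval M j.val) (0 : Fin (N + 1)) s.1| * gq N M s)
    (fun s _ => mul_nonneg (abs_nonneg _) (gq_nonneg N M s)) hs0mem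
  have hQ : Qq N μ (0 : Fin (N+1)) i1 = μ := by
    unfold Qq
    norm_num [hi1def, Fin.ext_iff]
  have hA : 1 ≤ |Aq M (1:ℕ) j j| := by
    have h3 : 0 < j.val := hj
    rcases Nat.lt_or_ge j.val M with h | h
    · have hv : Aq M 1 j j = -2 := by
        unfold Aq upRate
        rw [if_neg (by omega : ¬(j.val = j.val + 1)),
          if_neg (by omega : ¬(j.val + 1 = j.val)), if_pos rfl, if_pos h, if_pos h3]
        norm_num
      rw [hv]; norm_num
    · have hv : Aq M 1 j j = -1 := by
        unfold Aq upRate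
        rw [if_neg (by omega : ¬(j.val = j.val + 1)),
          if_neg (by omega : ¬(j.val + 1 = j.val)), if_pos rfl,
          if_neg (by omega : ¬(j.val < M)), if_pos h3]
        norm_num
      rw [hv]; norm_num
  have hσ1 : σq M 1 = (M:ℝ) + 1 := by
    unfold σq upRate
    norm_num
  have hg1 : gq N M (i1, j) = μ⁻¹ / ηq N μ * (1 / ((M:ℝ)+1)) := by
    unfold gq mq νq upRate
    simp [hi1def, hσ1, ← hμdef]
  have hfs0 : |Aq M (1:ℕ) j j * Qq N μ (0:Fin (N+1)) i1| * gq N M (i1, j)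
      = |Aq M (1:ℕ) j j| * (μ * (μ⁻¹ / ηq N μ * (1 / ((M:ℝ)+1)))) := by
    rw [hQ, abs_mul, abs_of_pos hμpos, hg1]; ring
  have he : μ * (μ⁻¹ / ηq N μ * (1/((M:ℝ)+1))) = (ηq N μ)⁻¹ * ((M:ℝ)+1)⁻¹ := by
    field_simp
  have hstep : (ηq N μ)⁻¹ * ((M:ℝ)+1)⁻¹
      ≤ |Aq M (1:ℕ) j j * Qq N μ (0:Fin (N+1)) i1| * gq N M (i1, j) := by
    rw [hfs0, he]
    exact le_mul_of_one_le_left (by positivity) hA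
  have hLHS : (ηq N μ)⁻¹ * ((M:ℝ)+1)⁻¹
      ≤ ∑ s ∈ Finset.univ.erase ((0 : Fin (N + 1)), j),
          |Aq M s.1.val j s.2 * Qq N (μval M j.val) (0 : Fin (N + 1)) s.1| * gq N M s := by
    refine le_trans ?_ hsingle
    simpa [hi1def, ← hμdef] using hstep
  -- RHS upper bound
  have hRsub : (∑ s ∈ Finset.univ.erase ((0 : Fin (N + 1)), j),
        |Aq M 0 s.2 j * Qq N (μval M s.2.val) s.1 (0 : Fin (N + 1))| *
          gq N M ((0 : Fin (N + 1)), j))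
      ≤ ∑ s : Fin (N+1) × Fin (M+1),
        |Aq M 0 s.2 j * Qq N (μval M s.2.val) s.1 (0 : Fin (N + 1))| *
          gq N M ((0 : Fin (N + 1)), j) :=
    Finset.sum_le_sum_of_subset_of_nonneg (Finset.erase_subset _ _)
      (fun s _ _ => mul_nonneg (abs_nonneg _) (gq_nonneg N M _))
  have habs8 : ∑ s : Fin (N+1) × Fin (M+1),
      |Aq M 0 s.2 j * Qq N (μval M s.2.val) s.1 (0 : Fin (N + 1))| ≤ 8 := by
    calc ∑ s : Fin (N+1) × Fin (M+1),
        |Aq M 0 s.2 j * Qq N (μval M s.2.val) s.1 (0 : Fin (N + 1))|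
        = ∑ i' : Fin (N+1), ∑ j' : Fin (M+1), |Qq N 1 i' 0| * |Aq M 0 j' j| := by
          rw [Fintype.sum_prod_type]
          refine Finset.sum_congr rfl fun i' _ => Finset.sum_congr rfl fun j' _ => ?_
          rw [abs_mul, qq_abs_col0 N hN _ i', ← qq_abs_col0 N hN 1 i', mul_comm]
      _ = (∑ i' : Fin (N+1), |Qq N 1 i' 0|) * (∑ j' : Fin (M+1), |Aq M 0 j' j|) :=
          (Finset.sum_mul_sum _ _ _ _).symm
      _ ≤ 8 := by
          rw [qq_sum_col0 N hN 1]
          linarith [aq0_sum_le M hM1 j]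
  have hgp_nonneg : 0 ≤ gq N M ((0 : Fin (N + 1)), j) := gq_nonneg N M _
  have hgp_le : gq N M ((0 : Fin (N + 1)), j) ≤ (ηq N μ)⁻¹ * ((M:ℝ)^2)⁻¹ := by
    unfold gq mq νq
    simp only [Fin.val_zero, pow_zero, ← hμdef]
    have hup : upRate M 0 = ((M:ℝ)^2)⁻¹ := by unfold upRate; simp
    have h1 : upRate M 0 ^ j.val ≤ ((M:ℝ)^2)⁻¹ := by
      rw [hup]
      calc ((M:ℝ)^2)⁻¹ ^ j.val ≤ ((M:ℝ)^2)⁻¹ ^ 1 :=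
            pow_le_pow_of_le_one (by positivity) hMinv hj
        _ = ((M:ℝ)^2)⁻¹ := pow_one _
    have h2 : upRate M 0 ^ j.val / σq M 0 ≤ upRate M 0 ^ j.val :=
      div_le_self (pow_nonneg (upRate_nonneg M 0) _) (sigma_ge_one M 0)
    have h3 : upRate M 0 ^ j.val / σq M 0 ≤ ((M:ℝ)^2)⁻¹ := le_trans h2 h1
    rw [one_div]
    exact mul_le_mul_of_nonneg_left h3 (by positivity)
  have harith : 8 * (((M:ℝ)^2)⁻¹) ≤ ((M:ℝ)+1)⁻¹ := by
    rw [inv_eq_one_div, inv_eq_one_div, mul_one_div, div_le_div_iff₀ (by positivity) (by positivity)]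
    nlinarith
  have hRHS : (∑ s ∈ Finset.univ.erase ((0 : Fin (N + 1)), j),
        |Aq M 0 s.2 j * Qq N (μval M s.2.val) s.1 (0 : Fin (N + 1))| *
          gq N M ((0 : Fin (N + 1)), j))
      ≤ (ηq N μ)⁻¹ * ((M:ℝ)+1)⁻¹ := by
    refine le_trans hRsub ?_
    rw [← Finset.sum_mul]
    calc (∑ s : Fin (N+1) × Fin (M+1),
          |Aq M 0 s.2 j * Qq N (μval M s.2.val) s.1 (0 : Fin (N + 1))|) *
            gq N M ((0 : Fin (N + 1)), j)
        ≤ 8 * gq N M ((0 : Fin (N + 1)), j) :=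
          mul_le_mul_of_nonneg_right habs8 hgp_nonneg
      _ ≤ 8 * ((ηq N μ)⁻¹ * ((M:ℝ)^2)⁻¹) := by
          exact mul_le_mul_of_nonneg_left hgp_le (by norm_num)
      _ = (ηq N μ)⁻¹ * (8 * ((M:ℝ)^2)⁻¹) := by ring
      _ ≤ (ηq N μ)⁻¹ * ((M:ℝ)+1)⁻¹ :=
          mul_le_mul_of_nonneg_left harith (by positivity)
  refine ⟨le_trans hRHS hLHS, ?_⟩
  -- second part: τ equals first branch
  have hQ00 : Qq N (μval M j.val) (0 : Fin (N + 1)) (0 : Fin (N + 1)) = -1 := by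
    unfold Qq
    simp [show 0 < N by omega]
  have hAq0 : Aq M 0 j j ≤ -1 := by
    unfold Aq upRate
    rw [if_neg (by omega : ¬(j.val = j.val + 1)),
      if_neg (by omega : ¬(j.val + 1 = j.val)), if_pos rfl,
      if_pos (show 0 < j.val from hj)]
    have h0 : (0:ℝ) ≤ (if j.val < M then (if (0:ℕ) = 0 then ((M:ℝ)^2)⁻¹ else ((0:ℕ):ℝ)) else 0) := by
      split
      · norm_num
      · exact le_refl _
    linarith
  have hD : 0 < Aq M 0 j j * Qq N (μval M j.val) (0 : Fin (N + 1)) (0 : Fin (N + 1)) := by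
    rw [hQ00, mul_neg_one]
    linarith
  have hgppos : 0 < gq N M ((0 : Fin (N + 1)), j) := by
    unfold gq mq νq upRate
    simp only [Fin.val_zero, pow_zero, if_pos rfl]
    have hb : 0 < ((M:ℝ)^2)⁻¹ ^ j.val := pow_pos (inv_pos.2 (pow_pos hMpos 2)) j.val
    exact mul_pos (div_pos one_pos hη) (div_pos hb (sigma_pos M 0))
  have hDgp : 0 < Aq M 0 j j * Qq N (μval M j.val) (0 : Fin (N + 1)) (0 : Fin (N + 1)) *
      gq N M ((0 : Fin (N + 1)), j) := mul_pos hD hgppos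
  have hkey : (∑ s ∈ Finset.univ.erase ((0 : Fin (N + 1)), j),
        |Aq M 0 s.2 j * Qq N (μval M s.2.val) s.1 (0 : Fin (N + 1))|) *
          gq N M ((0 : Fin (N + 1)), j)
      ≤ ∑ s ∈ Finset.univ.erase ((0 : Fin (N + 1)), j),
          |Aq M s.1.val j s.2 * Qq N (μval M j.val) (0 : Fin (N + 1)) s.1| * gq N M s := by
    rw [Finset.sum_mul]
    exact le_trans hRHS hLHS
  unfold τq
  simp only [Fin.val_zero]
  apply max_eq_left
  rw [div_le_div_iff₀ hD hDgp]
  nlinarith [mul_le_mul_of_nonneg_right hkey hD.le, hkey, hD, hgppos]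



end
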